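/- Let K be a field of characteristic p > 0. The K-vector space of all cyclic 1-cocycles on O₁ = K[x]/(x^p), i.e., skew-symmetric bilinear forms φ with φ(ab,c)+φ(bc,a)+φ(ca,b)=0, has dimension exactly 1 if p > 2. -/

import Mathlib

open Polynomial

set_option maxHeartbeats 1000000

/-- for p > 2, the space of cyclic 1-cocycles on
O₁ = K[x]/(x^p) (skew-symmetric bilinear forms φ with
φ(ab,c)+φ(bc,a)+φ(ca,b)=0) has dimension exactly 1: it contains a nonzero
element of which every element is a scalar multiple. -/
theorem stmt_11 (K : Type*) [Field K] (p : ℕ) (hp : p.Prime) [CharP K p]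
    (hp2 : 2 < p) :
    ∃ α : AdjoinRoot (Polynomial.X ^ p : Polynomial K) →ₗ[K]
          AdjoinRoot (Polynomial.X ^ p : Polynomial K) →ₗ[K] K,
      α ≠ 0 ∧
      (∀ a b, α a b = - α b a) ∧
      (∀ a b c, α (a * b) c + α (b * c) a + α (c * a) b = 0) ∧
      ∀ φ : AdjoinRoot (Polynomial.X ^ p : Polynomial K) →ₗ[K]
            AdjoinRoot (Polynomial.X ^ p : Polynomial K) →ₗ[K] K,
        (∀ a b, φ a b = - φ b a) →
        (∀ a b c, φ (a * b) c + φ (b * c) a + φ (c * a) b = 0) →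
        ∃ c : K, φ = c • α := by
  classical
  have hp1 : 0 < p := hp.pos
  have hp0 : (p : K) = 0 := CharP.cast_eq_zero K p
  have h0 : (X ^ p : K[X]) ≠ 0 := pow_ne_zero _ X_ne_zero
  set O := AdjoinRoot (X ^ p : K[X]) with hO
  let r : O := AdjoinRoot.root _
  have hr : r ^ p = 0 := by
    have h1 : (AdjoinRoot.mk (X ^ p : K[X])) (X ^ p) = 0 := by
      rw [AdjoinRoot.mk_self]
    rwa [map_pow, AdjoinRoot.mk_X] at h1
  have hzero : ∀ i, p ≤ i → r ^ i = 0 := by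
    intro i hi
    obtain ⟨m, rfl⟩ := Nat.exists_eq_add_of_le hi
    rw [pow_add, hr, zero_mul]
  let B := AdjoinRoot.powerBasis h0
  have hd : B.dim = p := by
    simp [B, AdjoinRoot.powerBasis_dim, natDegree_X_pow]
  let bb : Module.Basis (Fin p) K O := B.basis.reindex (finCongr hd)
  have hbb : ∀ i : Fin p, bb i = r ^ (i : ℕ) := by
    intro i
    show (B.basis.reindex (finCongr hd)) i = r ^ (i : ℕ)
    rw [Module.Basis.reindex_apply, PowerBasis.basis_eq_pow, AdjoinRoot.powerBasis_gen]
    simp [r]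
  let F : Fin p → (O →ₗ[K] K) := fun i => bb.constr K fun j =>
      if (i : ℕ) + (j : ℕ) = p then ((i : ℕ) : K) else 0
  let α : O →ₗ[K] O →ₗ[K] K := bb.constr K F
  have hαb : ∀ i j : Fin p, α (bb i) (bb j) =
      if (i : ℕ) + (j : ℕ) = p then ((i : ℕ) : K) else 0 := by
    intro i j
    have h1 : α (bb i) = F i := bb.constr_basis K F i
    rw [h1]
    exact bb.constr_basis K _ j
  have key : ∀ i j : ℕ, α (r ^ i) (r ^ j) = if i + j = p then (i : K) else 0 := by
    intro i j
    by_cases hi : i < p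
    · by_cases hj : j < p
      · have h := hαb ⟨i, hi⟩ ⟨j, hj⟩
        rw [hbb, hbb] at h
        simpa using h
      · rw [hzero j (le_of_not_gt hj), map_zero]
        split_ifs with h
        · have : i = 0 := by omega
          simp [this]
        · rfl
    · rw [hzero i (le_of_not_gt hi), map_zero, LinearMap.zero_apply]
      split_ifs with h
      · have : i = p := by omega
        rw [this, hp0]
      · rfl
  have hskewmap : α = -α.flip := by
    refine bb.ext fun i => bb.ext fun j => ?_
    rw [hbb, hbb]
    simp only [LinearMap.neg_apply, LinearMap.flip_apply]
    rw [key, key]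
    split_ifs with h1 h2 h2
    · have hc : ((i : ℕ) : K) + ((j : ℕ) : K) = 0 := by
        have := congrArg (Nat.cast : ℕ → K) h1
        push_cast at this
        rw [this, hp0]
      linear_combination hc
    · omega
    · omega
    · ring
  have hskew : ∀ a b : O, α a b = - α b a := by
    intro a b
    conv_lhs => rw [hskewmap]
    simp
  -- trilinear machinery
  let Mu : O →ₗ[K] O →ₗ[K] O := LinearMap.mul K O
  let T1 : O →ₗ[K] O →ₗ[K] O →ₗ[K] K := Mu.compr₂ α
  let cyc : (O →ₗ[K] O →ₗ[K] O →ₗ[K] K) → (O →ₗ[K] O →ₗ[K] O →ₗ[K] K) := fun T =>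
    LinearMap.mk₂ K (fun a b => (T b).flip a)
      (fun a a' b => by simp)
      (fun c a b => by simp)
      (fun a b b' => by ext c; simp)
      (fun c a b => by ext x; simp)
  have hcycapp : ∀ T : O →ₗ[K] O →ₗ[K] O →ₗ[K] K, ∀ a b c : O,
      cyc T a b c = T b c a := by
    intro T a b c
    simp [cyc, LinearMap.mk₂_apply, LinearMap.flip_apply]
  have hT1app : ∀ a b c : O, T1 a b c = α (a * b) c := by
    intro a b c
    simp [T1, Mu, LinearMap.compr₂_apply, LinearMap.mul_apply']
  have hT : T1 + cyc T1 + cyc (cyc T1) = 0 := by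
    refine bb.ext fun i => bb.ext fun j => bb.ext fun k => ?_
    simp only [LinearMap.add_apply, LinearMap.zero_apply]
    rw [hbb, hbb, hbb, hcycapp, hcycapp, hcycapp, hT1app, hT1app, hT1app,
      ← pow_add, ← pow_add, ← pow_add, key, key, key]
    split_ifs with h1 h2 h3 <;> try omega
    · have hc : (((i:ℕ) + (j:ℕ) : ℕ) : K) + (((j:ℕ) + (k:ℕ) : ℕ) : K)
          + (((k:ℕ) + (i:ℕ) : ℕ) : K) = ((2 * p : ℕ) : K) := by
        push_cast
        have := congrArg (Nat.cast : ℕ → K) h1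
        push_cast at this
        linear_combination 2 * this
      rw [hc]
      push_cast [hp0]
      ring
    · simp
  have hcoc : ∀ a b c : O, α (a * b) c + α (b * c) a + α (c * a) b = 0 := by
    intro a b c
    have h := LinearMap.congr_fun (LinearMap.congr_fun (LinearMap.congr_fun hT a) b) c
    simp only [LinearMap.add_apply, LinearMap.zero_apply] at h
    simp only [hcycapp, hT1app] at h
    exact h
  refine ⟨α, ?_, hskew, hcoc, ?_⟩
  · intro hα0
    have h1 := key 1 (p - 1)
    rw [hα0] at h1
    rw [if_pos (by omega)] at h1
    simp at h1
  · intro φ hs hc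
    have hg1 : ∀ z : O, φ z 1 = 0 := by
      intro z
      have h := hc 1 1 z
      rw [one_mul, one_mul, mul_one] at h
      have h2 := hs 1 z
      linear_combination h - h2
    have hstep : ∀ i j : ℕ,
        φ (r ^ (i+1)) (r ^ j) = φ (r ^ i) (r ^ (j+1)) - φ (r ^ (i+j)) (r ^ 1) := by
      intro i j
      have h := hc (r ^ i) (r ^ 1) (r ^ j)
      rw [← pow_add, ← pow_add, ← pow_add, Nat.add_comm 1 j, Nat.add_comm j i] at h
      have h2 := hs (r ^ (j+1)) (r ^ i)
      linear_combination h - h2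
    have hlin : ∀ i j n : ℕ, i + j = n + 1 →
        φ (r ^ i) (r ^ j) = -(i : K) * φ (r ^ n) (r ^ 1) := by
      intro i
      induction i with
      | zero =>
        intro j n hn
        have h := hs (r ^ 0) (r ^ j)
        have h1 : φ (r ^ j) (r ^ 0) = 0 := by
          rw [pow_zero]; exact hg1 _
        rw [h, h1]
        push_cast
        ring
      | succ i ih =>
        intro j n hn
        have h := hstep i j
        have h3 := ih (j + 1) n (by omega)
        have h4 : i + j = n := by omega
        rw [h, h3, h4]
        push_cast
        ring
    have ht0 : ∀ k : ℕ, k + 1 ≠ p → φ (r ^ k) (r ^ 1) = 0 := by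
      intro k hk
      by_cases hkp : p ≤ k
      · rw [hzero k hkp]
        simp
      · have h := hlin k 1 k rfl
        have hne : ((k : K) + 1) ≠ 0 := by
          intro hcon
          have hz : ((k + 1 : ℕ) : K) = 0 := by push_cast; linear_combination hcon
          rw [CharP.cast_eq_zero_iff K p] at hz
          have := Nat.le_of_dvd (by omega) hz
          omega
        have hmul : ((k : K) + 1) * φ (r ^ k) (r ^ 1) = 0 := by
          linear_combination h
        rcases mul_eq_zero.1 hmul with h' | h'
        · exact absurd h' hne
        · exact h'
    refine ⟨φ (r ^ 1) (r ^ (p - 1)), ?_⟩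
    have hval : ∀ i j : ℕ, φ (r ^ i) (r ^ j) =
        φ (r ^ 1) (r ^ (p - 1)) * (if i + j = p then (i : K) else 0) := by
      intro i j
      rcases Nat.eq_zero_or_pos (i + j) with hij | hij
      · have hi : i = 0 := by omega
        have hj : j = 0 := by omega
        subst hi; subst hj
        rw [if_neg (by omega), mul_zero, pow_zero]
        exact hg1 _
      · obtain ⟨n, hn⟩ : ∃ n, i + j = n + 1 := ⟨i + j - 1, by omega⟩
        rw [hlin i j n hn]
        by_cases hnp : n + 1 = p
        · rw [if_pos (by omega)]
          rw [hs (r ^ n) (r ^ 1)]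
          have hn' : n = p - 1 := by omega
          rw [hn']
          ring
        · rw [ht0 n hnp, if_neg (by omega)]
          ring
    refine bb.ext fun i => bb.ext fun j => ?_
    rw [hbb, hbb, hval]
    simp only [LinearMap.smul_apply, smul_eq_mul]
    rw [key]
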